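/- Let (E,‖·‖_E) be a pseudo-normed real vector space, r < r' real numbers and q ∈ [1,∞). For every f ∈ Σ^r_q(E) one has (∑_{n∈ℕ} 2^{−qn(r'−r)} ‖S_n f‖_{Σ^{r'}_1}^q)^{1/q} ≤ (1/(1 − 2^{r−r'})) ‖f‖_{Σ^r_q}. -/

import Mathlib

open Filter
open scoped ENNReal NNReal

/-- A pseudo-norm on a real vector space: nonnegative, symmetric, subadditive,
and vanishing exactly at `0`. -/
structure IsPseudoNorm {E : Type*} [AddCommGroup E] [Module ℝ E] (N : E → ℝ) : Prop where
  nonneg : ∀ x, 0 ≤ N x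
  neg : ∀ x, N (-x) = N x
  add_le : ∀ x y, N (x + y) ≤ N x + N y
  eq_zero_iff : ∀ x, N x = 0 ↔ x = 0

/-- The `Σ^s_q(E)` pseudo-norm of a sequence `f : ℕ → E`:
`(∑_k 2^{qks} ‖f_k‖_E^q)^{1/q}` for `q < ∞` and `sup_k 2^{ks} ‖f_k‖_E` for `q = ∞`. -/
noncomputable def sigmaNorm {E : Type*} (N : E → ℝ) (s : ℝ) (q : ℝ≥0∞) (f : ℕ → E) : ℝ≥0∞ :=
  if q = ⊤ then ⨆ k : ℕ, ENNReal.ofReal ((2 : ℝ) ^ ((k : ℝ) * s) * N (f k))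
  else (∑' k : ℕ, ENNReal.ofReal ((2 : ℝ) ^ ((k : ℝ) * s) * N (f k)) ^ q.toReal) ^ (1 / q.toReal)

/-- Membership in `Σ^s_q(E)`: finiteness of the norm when `q < ∞`, and
`2^{ks}‖f_k‖_E → 0` when `q = ∞`. -/
def memSigma {E : Type*} (N : E → ℝ) (s : ℝ) (q : ℝ≥0∞) (f : ℕ → E) : Prop :=
  if q = ⊤ then Tendsto (fun k : ℕ => (2 : ℝ) ^ ((k : ℝ) * s) * N (f k)) atTop (nhds 0)
  else sigmaNorm N s q f < ⊤

/-- Friedrichs smoothing operator `S_n`: truncation of a sequence after index `n`. -/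
def smoothS {E : Type*} [Zero E] (n : ℕ) (f : ℕ → E) : ℕ → E :=
  fun k => if k ≤ n then f k else 0

open MeasureTheory in
lemma holder_aux (u a : ℕ → ℝ≥0∞) {q : ℝ} (hq : 1 ≤ q) {C : ℝ≥0∞} (hC : ∑' k, u k ≤ C) :
    (∑' k, u k * a k) ^ q ≤ C ^ (q - 1) * ∑' k, u k * a k ^ q := by
  rcases eq_or_lt_of_le hq with h1 | h1
  · simp [← h1]
  · have hq0 : (0 : ℝ) < q := lt_trans one_pos h1
    set p := q / (q - 1) with hp
    have hpq : p.HolderConjugate q := (Real.HolderConjugate.conjExponent h1).symm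
    have hp0 : (0 : ℝ) < p := hpq.pos
    have key : ∀ x : ℝ≥0∞, x = x ^ (1/p) * x ^ (1/q) := by
      intro x
      have h' : 1/p + 1/q = 1 := by
        have := hpq.inv_add_inv_eq_one
        simpa [one_div] using this
      rw [← ENNReal.rpow_add_of_nonneg _ _ (by positivity) (by positivity), h',
        ENNReal.rpow_one]
    have holder : ∑' k, u k * a k ≤
        (∑' k, u k) ^ (1/p) * (∑' k, u k * a k ^ q) ^ (1/q) := by
      have H := ENNReal.lintegral_mul_le_Lp_mul_Lq (Measure.count (α := ℕ)) hpq
        (f := fun k => (u k) ^ (1/p)) (g := fun k => (u k) ^ (1/q) * a k)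
        measurable_from_nat.aemeasurable measurable_from_nat.aemeasurable
      simp only [lintegral_count] at H
      calc ∑' k, u k * a k = ∑' k, (u k) ^ (1/p) * ((u k) ^ (1/q) * a k) := by
            refine tsum_congr fun k => ?_
            rw [← mul_assoc, ← key]
        _ ≤ (∑' k, ((u k) ^ (1/p)) ^ p) ^ (1/p) * (∑' k, ((u k) ^ (1/q) * a k) ^ q) ^ (1/q) := H
        _ = (∑' k, u k) ^ (1/p) * (∑' k, u k * a k ^ q) ^ (1/q) := by
            congr 2
            · refine tsum_congr fun k => ?_
              rw [← ENNReal.rpow_mul, one_div_mul_cancel hp0.ne', ENNReal.rpow_one]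
            · refine tsum_congr fun k => ?_
              rw [ENNReal.mul_rpow_of_nonneg _ _ hq0.le, ← ENNReal.rpow_mul,
                one_div_mul_cancel hq0.ne', ENNReal.rpow_one]
    calc (∑' k, u k * a k) ^ q
        ≤ ((∑' k, u k) ^ (1/p) * (∑' k, u k * a k ^ q) ^ (1/q)) ^ q :=
          ENNReal.rpow_le_rpow holder hq0.le
      _ = (∑' k, u k) ^ ((1/p) * q) * ∑' k, u k * a k ^ q := by
          rw [ENNReal.mul_rpow_of_nonneg _ _ hq0.le, ← ENNReal.rpow_mul, ← ENNReal.rpow_mul,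
            one_div_mul_cancel hq0.ne', ENNReal.rpow_one]
      _ ≤ C ^ (q - 1) * ∑' k, u k * a k ^ q := by
          have : (1/p) * q = q - 1 := by
            rw [hp]
            field_simp
          rw [this]
          exact mul_le_mul_left (ENNReal.rpow_le_rpow hC (by linarith)) _

lemma geom_sum_aux (r r' : ℝ) (hrr' : r < r') :
    ∑' j : ℕ, ENNReal.ofReal ((2:ℝ) ^ (-((j:ℝ) * (r' - r)))) =
      ENNReal.ofReal (1 / (1 - (2:ℝ) ^ (r - r'))) := by
  have hgeom_lt : (2:ℝ) ^ (r - r') < 1 :=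
    Real.rpow_lt_one_of_one_lt_of_neg one_lt_two (by linarith)
  have hden : (0:ℝ) < 1 - (2:ℝ) ^ (r - r') := by linarith
  have hcj : ∀ j : ℕ, ENNReal.ofReal ((2:ℝ) ^ (-((j:ℝ) * (r' - r)))) =
      (ENNReal.ofReal ((2:ℝ) ^ (r - r'))) ^ j := by
    intro j
    rw [← ENNReal.ofReal_pow (Real.rpow_pos_of_pos two_pos _).le,
      ← Real.rpow_natCast ((2:ℝ) ^ (r - r')) j, ← Real.rpow_mul (by norm_num : (0:ℝ) ≤ 2)]
    congr 2
    ring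
  rw [tsum_congr hcj, ENNReal.tsum_geometric,
    ← ENNReal.ofReal_one, ← ENNReal.ofReal_sub _ (Real.rpow_pos_of_pos two_pos _).le,
    one_div, ENNReal.ofReal_inv_of_pos hden]

lemma shift_aux (c : ℕ → ℝ≥0∞) (A : ℝ≥0∞) (k : ℕ) :
    ∑' n : ℕ, (if k ≤ n then c (n - k) else 0) * A = (∑' j : ℕ, c j) * A := by
  rw [← Summable.sum_add_tsum_nat_add' (f := fun n => (if k ≤ n then c (n - k) else 0) * A)
    (k := k) ENNReal.summable]
  have h1 : ∑ i ∈ Finset.range k, (if k ≤ i then c (i - k) else 0) * A = 0 := by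
    apply Finset.sum_eq_zero
    intro i hi
    simp [Nat.not_le.mpr (Finset.mem_range.mp hi)]
  rw [h1, zero_add, ← ENNReal.tsum_mul_right]
  refine tsum_congr fun i => ?_
  simp [Nat.le_add_left]

/-- Lemma 3.6 (ii): for `r < r'`, `q ∈ [1,∞)` and `f ∈ Σ^r_q(E)`,
`(∑_n 2^{-qn(r'-r)} ‖S_n f‖_{Σ^{r'}_1}^q)^{1/q} ≤ (1/(1-2^{r-r'})) ‖f‖_{Σ^r_q}`. -/
theorem smoothS_sigmaNorm_one_lq_le {E : Type*} [AddCommGroup E] [Module ℝ E]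
    (N : E → ℝ) (hN : IsPseudoNorm N) (r r' : ℝ) (hrr' : r < r')
    (q : ℝ) (hq : 1 ≤ q) (f : ℕ → E) (hf : memSigma N r (ENNReal.ofReal q) f) :
    (∑' n : ℕ, ENNReal.ofReal ((2 : ℝ) ^ (-(q * (n : ℝ) * (r' - r)))) *
        sigmaNorm N r' 1 (smoothS n f) ^ q) ^ (1 / q)
      ≤ ENNReal.ofReal (1 / (1 - (2 : ℝ) ^ (r - r'))) *
          sigmaNorm N r (ENNReal.ofReal q) f := by
  have hq0 : (0:ℝ) < q := lt_of_lt_of_le one_pos hq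
  have hN0 : N 0 = 0 := (hN.eq_zero_iff 0).mpr rfl
  set a : ℕ → ℝ≥0∞ :=
    fun k => ENNReal.ofReal ((2:ℝ) ^ ((k:ℝ) * r)) * ENNReal.ofReal (N (f k)) with ha
  set c : ℕ → ℝ≥0∞ := fun j => ENNReal.ofReal ((2:ℝ) ^ (-((j:ℝ) * (r' - r)))) with hc
  set C : ℝ≥0∞ := ENNReal.ofReal (1 / (1 - (2:ℝ) ^ (r - r'))) with hCdef
  have hgeom_lt : (2:ℝ) ^ (r - r') < 1 :=
    Real.rpow_lt_one_of_one_lt_of_neg one_lt_two (by linarith)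
  have hden : (0:ℝ) < 1 - (2:ℝ) ^ (r - r') := by linarith
  have hC0 : C ≠ 0 := by
    simp only [hCdef, ne_eq, ENNReal.ofReal_eq_zero, not_le]
    positivity
  have hCtop : C ≠ ⊤ := ENNReal.ofReal_ne_top
  have hgeom_sum : ∑' j, c j = C := geom_sum_aux r r' hrr'
  -- the Σ^r_q norm of f
  have hRHSnorm : sigmaNorm N r (ENNReal.ofReal q) f = (∑' k, a k ^ q) ^ (1/q) := by
    rw [sigmaNorm, if_neg ENNReal.ofReal_ne_top, ENNReal.toReal_ofReal hq0.le]
    congr 1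
    refine tsum_congr fun k => ?_
    rw [ha, ENNReal.ofReal_mul (Real.rpow_nonneg (by norm_num) _)]
  -- the Σ^{r'}_1 norm of the truncation
  have hSn : ∀ n : ℕ, sigmaNorm N r' 1 (smoothS n f) =
      ∑' k : ℕ, (if k ≤ n then ENNReal.ofReal ((2:ℝ) ^ ((k:ℝ) * r')) * ENNReal.ofReal (N (f k))
        else 0) := by
    intro n
    rw [sigmaNorm, if_neg ENNReal.one_ne_top]
    norm_num
    refine tsum_congr fun k => ?_
    by_cases hk : k ≤ n
    · rw [smoothS, if_pos hk, if_pos hk,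
        ENNReal.ofReal_mul (Real.rpow_nonneg (by norm_num) _)]
    · rw [smoothS, if_neg hk, if_neg hk, hN0, mul_zero, ENNReal.ofReal_zero]
  -- per-n identity
  have hterm : ∀ n : ℕ,
      ENNReal.ofReal ((2:ℝ) ^ (-(q * (n:ℝ) * (r' - r)))) * sigmaNorm N r' 1 (smoothS n f) ^ q
        = (∑' k, (if k ≤ n then c (n - k) else 0) * a k) ^ q := by
    intro n
    rw [hSn n]
    have h1 : ENNReal.ofReal ((2:ℝ) ^ (-(q * (n:ℝ) * (r' - r)))) = (c n) ^ q := by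
      simp only [hc]
      rw [ENNReal.ofReal_rpow_of_pos (Real.rpow_pos_of_pos two_pos _),
        ← Real.rpow_mul (by norm_num : (0:ℝ) ≤ 2)]
      congr 2
      ring
    rw [h1, ← ENNReal.mul_rpow_of_nonneg _ _ hq0.le]
    congr 1
    rw [← ENNReal.tsum_mul_left]
    refine tsum_congr fun k => ?_
    by_cases hk : k ≤ n
    · rw [if_pos hk, if_pos hk]
      have hx : c n * ENNReal.ofReal ((2:ℝ) ^ ((k:ℝ) * r')) =
          c (n - k) * ENNReal.ofReal ((2:ℝ) ^ ((k:ℝ) * r)) := by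
        simp only [hc]
        rw [← ENNReal.ofReal_mul (Real.rpow_nonneg (by norm_num) _),
          ← ENNReal.ofReal_mul (Real.rpow_nonneg (by norm_num) _),
          ← Real.rpow_add two_pos, ← Real.rpow_add two_pos]
        congr 1
        have hnk : ((n - k : ℕ) : ℝ) = (n:ℝ) - (k:ℝ) := by
          exact Nat.cast_sub hk
        rw [hnk]
        ring
      simp only [ha]
      rw [← mul_assoc, ← mul_assoc, hx]
    · rw [if_neg hk, if_neg hk, zero_mul, mul_zero]
  -- the truncated geometric sums are bounded by C
  have hsum_u : ∀ n : ℕ, (∑' k : ℕ, (if k ≤ n then c (n - k) else 0)) ≤ C := by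
    intro n
    have h2 : (∑' k : ℕ, (if k ≤ n then c (n - k) else 0))
        = ∑ k ∈ Finset.range (n+1), c (n - k) := by
      rw [tsum_eq_sum (s := Finset.range (n+1))
        (by intro b hb; rw [if_neg]; intro h; exact hb (Finset.mem_range.mpr (by omega)))]
      refine Finset.sum_congr rfl fun k hk => ?_
      rw [if_pos (Nat.lt_succ_iff.mp (Finset.mem_range.mp hk))]
    rw [h2]
    have h3 : ∑ k ∈ Finset.range (n+1), c (n - k) = ∑ k ∈ Finset.range (n+1), c k := by
      have := Finset.sum_range_reflect c (n+1)
      simpa using this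
    rw [h3, ← hgeom_sum]
    exact ENNReal.sum_le_tsum _
  -- main summed estimate
  have hmain : ∑' n, (∑' k, (if k ≤ n then c (n - k) else 0) * a k) ^ q
      ≤ C ^ q * ∑' k, a k ^ q := by
    calc ∑' n, (∑' k, (if k ≤ n then c (n - k) else 0) * a k) ^ q
        ≤ ∑' n, C ^ (q - 1) * ∑' k, (if k ≤ n then c (n - k) else 0) * a k ^ q :=
          ENNReal.tsum_le_tsum fun n => holder_aux _ _ hq (hsum_u n)
      _ = C ^ (q - 1) * ∑' n, ∑' k, (if k ≤ n then c (n - k) else 0) * a k ^ q :=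
          ENNReal.tsum_mul_left
      _ = C ^ (q - 1) * ∑' k, ∑' n, (if k ≤ n then c (n - k) else 0) * a k ^ q := by
          rw [ENNReal.tsum_comm]
      _ = C ^ (q - 1) * ∑' k, C * a k ^ q := by
          congr 1
          refine tsum_congr fun k => ?_
          rw [shift_aux c (a k ^ q) k, hgeom_sum]
      _ = C ^ q * ∑' k, a k ^ q := by
          rw [ENNReal.tsum_mul_left, ← mul_assoc]
          congr 1
          nth_rewrite 2 [← ENNReal.rpow_one C]
          rw [← ENNReal.rpow_add _ _ hC0 hCtop]
          norm_num
  -- conclusion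
  rw [hRHSnorm]
  calc (∑' n : ℕ, ENNReal.ofReal ((2:ℝ) ^ (-(q * (n:ℝ) * (r' - r)))) *
          sigmaNorm N r' 1 (smoothS n f) ^ q) ^ (1/q)
      = (∑' n, (∑' k, (if k ≤ n then c (n - k) else 0) * a k) ^ q) ^ (1/q) := by
        rw [tsum_congr hterm]
    _ ≤ (C ^ q * ∑' k, a k ^ q) ^ (1/q) := ENNReal.rpow_le_rpow hmain (by positivity)
    _ = C * (∑' k, a k ^ q) ^ (1/q) := by
        rw [ENNReal.mul_rpow_of_nonneg _ _ (by positivity), ← ENNReal.rpow_mul,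
          mul_one_div_cancel hq0.ne', ENNReal.rpow_one]
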